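/- Let G be a finite directed graph whose nodes are numbered 1, …, n and are each labeled max, min, average, or terminal, where exactly the nodes numbered n−1 and n are terminal and have no out-arcs, every max node and every min node has exactly one out-arc, every average node has one or two out-arcs, and every non-terminal node has at least one out-arc ending at a strictly higher-numbered node. Then G contains no bad subgraph; in particular, every node of G has a directed path to a terminal node. -/

import Mathlib

/-- The four kinds of nodes in a (simple stochastic) game graph. -/
inductive NodeLabel : Type
  | max
  | min
  | avg
  | term
  deriving DecidableEq

/-- `BadSubgraph label A S`: `S` is a *bad subgraph* of the directed graph with arc
relation `A` and node labeling `label`, i.e. `S` is nonempty, every max node in `S` has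
an out-arc ending in `S`, every min node in `S` has an out-arc ending in `S`, every
average node in `S` has all of its out-arcs ending in `S`, `S` contains no terminal
node, and `S` is strongly connected (via directed paths all of whose nodes lie in `S`). -/
def BadSubgraph {V : Type} (label : V → NodeLabel) (A : V → V → Prop) (S : Set V) : Prop :=
  S.Nonempty ∧
  (∀ v ∈ S, label v = NodeLabel.max → ∃ w ∈ S, A v w) ∧
  (∀ v ∈ S, label v = NodeLabel.min → ∃ w ∈ S, A v w) ∧
  (∀ v ∈ S, label v = NodeLabel.avg → ∀ w, A v w → w ∈ S) ∧
  (∀ v ∈ S, label v ≠ NodeLabel.term) ∧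
  (∀ u ∈ S, ∀ v ∈ S, Relation.ReflTransGen (fun a b => a ∈ S ∧ b ∈ S ∧ A a b) u v)

/-- Let `G` be a finite labeled directed graph whose nodes are numbered
`1, …, n` (node `v : Fin n` carries the number `v + 1`), where exactly the nodes
numbered `n - 1` and `n` are terminal and have no out-arcs, every max node and every
min node has exactly one out-arc, every average node has one or two out-arcs, and every
non-terminal node has at least one out-arc ending at a strictly higher-numbered node.
Then `G` contains no bad subgraph, and every node has a directed path to a terminal. -/
theorem stmt3 (n : ℕ) (hn : 2 ≤ n) (label : Fin n → NodeLabel) (A : Fin n → Fin n → Prop)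
    (hterm_iff : ∀ v : Fin n,
      label v = NodeLabel.term ↔ ((v : ℕ) = n - 2 ∨ (v : ℕ) = n - 1))
    (hterm_out : ∀ v, label v = NodeLabel.term → ∀ w, ¬ A v w)
    (hmax : ∀ v, label v = NodeLabel.max → ∃! w, A v w)
    (hmin : ∀ v, label v = NodeLabel.min → ∃! w, A v w)
    (havg : ∀ v, label v = NodeLabel.avg → (∃ w, A v w) ∧
      ∀ w₁ w₂ w₃, A v w₁ → A v w₂ → A v w₃ → (w₁ = w₂ ∨ w₁ = w₃ ∨ w₂ = w₃))
    (hup : ∀ v, label v ≠ NodeLabel.term → ∃ w, A v w ∧ v < w) :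
    (¬ ∃ S : Set (Fin n), BadSubgraph label A S) ∧
      ∀ v, ∃ t, label t = NodeLabel.term ∧ Relation.ReflTransGen A v t := by
  constructor
  · rintro ⟨S, hne, h2, h3, h4, h5, -⟩
    obtain ⟨v, hvS, hvmax⟩ : ∃ v ∈ S, ∀ w ∈ S, id v ≤ id w → id v = id w := by
      obtain ⟨v, hvS, hv⟩ := S.exists_max_image id S.toFinite hne
      exact ⟨v, hvS, fun w hw h => le_antisymm h (hv w hw)⟩
    have hnt : label v ≠ NodeLabel.term := h5 v hvS
    obtain ⟨w', hAw', hvw'⟩ := hup v hnt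
    have hw'S : w' ∈ S := by
      cases hl : label v with
      | term => exact absurd hl hnt
      | max =>
        obtain ⟨w, hwS, hAw⟩ := h2 v hvS hl
        obtain ⟨w0, -, huniq⟩ := hmax v hl
        rwa [huniq w' hAw', ← huniq w hAw]
      | min =>
        obtain ⟨w, hwS, hAw⟩ := h3 v hvS hl
        obtain ⟨w0, -, huniq⟩ := hmin v hl
        rwa [huniq w' hAw', ← huniq w hAw]
      | avg => exact h4 v hvS hl w' hAw'
    exact absurd (hvmax w' hw'S (le_of_lt hvw')) (ne_of_lt hvw')
  · have H : ∀ k, ∀ v : Fin n, n - (v : ℕ) ≤ k →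
        ∃ t, label t = NodeLabel.term ∧ Relation.ReflTransGen A v t := by
      intro k
      induction k with
      | zero =>
        intro v hv
        have := v.isLt
        omega
      | succ k ih =>
        intro v hv
        by_cases hl : label v = NodeLabel.term
        · exact ⟨v, hl, Relation.ReflTransGen.refl⟩
        · obtain ⟨w, hAw, hvw⟩ := hup v hl
          have hw : n - (w : ℕ) ≤ k := by
            have h1 : (v : ℕ) < (w : ℕ) := hvw
            have := w.isLt
            omega
          obtain ⟨t, ht, hpath⟩ := ih w hw
          exact ⟨t, ht, Relation.ReflTransGen.head hAw hpath⟩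
    exact fun v => H n v (Nat.sub_le _ _)
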